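/- The implicit nonnegativity constraint in the converse: for finite random variables W_c, W_1, S^n, Y^n with the per-letter decompositions I(W_1; Y^n | W_c) - I(W_1; S^n | W_c) = Σ_i [I(Ū_i; Y_i | V̄_i, X_{2,i}) - I(Ū_i; S_i | V̄_i, X_{2,i})] and I(W_c,W_1; Y^n) - I(W_c,W_1; S^n) ≤ Σ_i [I(Ū_i,V̄_i,X_{2,i}; Y_i) - I(Ū_i,V̄_i,X_{2,i}; S_i)], and with (W_c,W_1) independent of S^n, it follows that Σ_{i=1}^n [ I(V̄_i, X_{2,i}; Y_i) - I(V̄_i, X_{2,i}; S_i) ] ≥ 0. -/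

import Mathlib

open Real BigOperators Finset Filter

section InfoTheory

variable {Ω : Type*} [Fintype Ω]

/-- `μ` is a probability mass function on the finite sample space `Ω`. -/
def IsPMF (μ : Ω → ℝ) : Prop := (∀ ω, 0 ≤ μ ω) ∧ ∑ ω, μ ω = 1

/-- Probability that the random variable `X` takes the value `a`. -/
noncomputable def prob (μ : Ω → ℝ) {α : Type*} [DecidableEq α] (X : Ω → α) (a : α) : ℝ :=
  ∑ ω ∈ Finset.univ.filter (fun ω => X ω = a), μ ω

/-- Shannon entropy (base 2) of a finite-valued random variable. -/
noncomputable def Hent (μ : Ω → ℝ) {α : Type*} [Fintype α] [DecidableEq α] (X : Ω → α) : ℝ :=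
  -∑ a : α, prob μ X a * Real.logb 2 (prob μ X a)

/-- Conditional entropy `H(X | Z)`. -/
noncomputable def Hcond (μ : Ω → ℝ) {α β : Type*} [Fintype α] [DecidableEq α]
    [Fintype β] [DecidableEq β] (X : Ω → α) (Z : Ω → β) : ℝ :=
  Hent μ (fun ω => (X ω, Z ω)) - Hent μ Z

/-- Mutual information `I(X; Y)`. -/
noncomputable def mi (μ : Ω → ℝ) {α β : Type*} [Fintype α] [DecidableEq α]
    [Fintype β] [DecidableEq β] (X : Ω → α) (Y : Ω → β) : ℝ :=
  Hent μ X + Hent μ Y - Hent μ (fun ω => (X ω, Y ω))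

/-- Conditional mutual information `I(X; Y | Z)`. -/
noncomputable def cmi (μ : Ω → ℝ) {α β γ : Type*} [Fintype α] [DecidableEq α]
    [Fintype β] [DecidableEq β] [Fintype γ] [DecidableEq γ]
    (X : Ω → α) (Y : Ω → β) (Z : Ω → γ) : ℝ :=
  Hent μ (fun ω => (X ω, Z ω)) + Hent μ (fun ω => (Y ω, Z ω))
    - Hent μ (fun ω => (X ω, Y ω, Z ω)) - Hent μ Z

/-- Independence of two random variables. -/
def Indep (μ : Ω → ℝ) {α β : Type*} [DecidableEq α] [DecidableEq β]
    (X : Ω → α) (Y : Ω → β) : Prop :=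
  ∀ a b, prob μ (fun ω => (X ω, Y ω)) (a, b) = prob μ X a * prob μ Y b

/-- Conditional independence of `X` and `Y` given `Z`. -/
def CondIndep (μ : Ω → ℝ) {α β γ : Type*} [DecidableEq α] [DecidableEq β] [DecidableEq γ]
    (X : Ω → α) (Y : Ω → β) (Z : Ω → γ) : Prop :=
  ∀ a b c, prob μ (fun ω => (X ω, Y ω, Z ω)) (a, b, c) * prob μ Z c
    = prob μ (fun ω => (X ω, Z ω)) (a, c) * prob μ (fun ω => (Y ω, Z ω)) (b, c)

end InfoTheory

/-- Binary entropy function (base 2). -/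
noncomputable def binEnt (x : ℝ) : ℝ := -(x * Real.logb 2 x) - (1 - x) * Real.logb 2 (1 - x)

/-- Binary convolution `p * q = p(1-q) + q(1-p)`. -/
noncomputable def bconv (p q : ℝ) : ℝ := p * (1 - q) + q * (1 - p)

section MyHelpers
variable {Ω : Type*} [Fintype Ω]

lemma prob_nonneg' {α : Type*} [DecidableEq α] {μ : Ω → ℝ} (h : ∀ ω, 0 ≤ μ ω)
    (X : Ω → α) (a : α) : 0 ≤ prob μ X a :=
  Finset.sum_nonneg fun ω _ => h ω

lemma sum_prob' {α : Type*} [Fintype α] [DecidableEq α] (μ : Ω → ℝ) (X : Ω → α) :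
    ∑ a, prob μ X a = ∑ ω, μ ω := by
  unfold prob
  exact Finset.sum_fiberwise_of_maps_to (fun ω _ => Finset.mem_univ _) μ

lemma prob_pair_fst' {α β : Type*} [Fintype β] [DecidableEq α] [DecidableEq β]
    (μ : Ω → ℝ) (X : Ω → α) (Y : Ω → β) (a : α) :
    prob μ X a = ∑ b, prob μ (fun ω => (X ω, Y ω)) (a, b) := by
  unfold prob
  rw [← Finset.sum_fiberwise_of_maps_to (t := (Finset.univ : Finset β)) (g := Y)
        (s := Finset.univ.filter (fun ω => X ω = a)) (fun ω _ => Finset.mem_univ _) μ]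
  refine Finset.sum_congr rfl fun b _ => Finset.sum_congr ?_ (fun _ _ => rfl)
  rw [Finset.filter_filter]
  apply Finset.filter_congr
  intro ω _
  simp [Prod.ext_iff]

lemma prob_comp_inj' {α β : Type*} [DecidableEq α] [DecidableEq β]
    (μ : Ω → ℝ) (X : Ω → α) {g : α → β} (hg : Function.Injective g) (a : α) :
    prob μ (fun ω => g (X ω)) (g a) = prob μ X a := by
  unfold prob
  refine Finset.sum_congr ?_ fun _ _ => rfl
  apply Finset.filter_congr
  intro ω _
  simp [hg.eq_iff]

lemma Hent_comp' {α β : Type*} [Fintype α] [DecidableEq α] [Fintype β] [DecidableEq β]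
    (μ : Ω → ℝ) (X : Ω → α) {g : α → β} (hg : Function.Injective g) :
    Hent μ (fun ω => g (X ω)) = Hent μ X := by
  unfold Hent
  congr 1
  have h0 : ∀ b ∈ (Finset.univ : Finset β), b ∉ Finset.univ.image g →
      prob μ (fun ω => g (X ω)) b * Real.logb 2 (prob μ (fun ω => g (X ω)) b) = 0 := by
    intro b _ hb
    have hz : prob μ (fun ω => g (X ω)) b = 0 := by
      unfold prob
      rw [Finset.filter_false_of_mem, Finset.sum_empty]
      intro ω _ h
      exact hb (Finset.mem_image.2 ⟨X ω, Finset.mem_univ _, h⟩)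
    simp [hz]
  rw [← Finset.sum_subset (Finset.subset_univ _) h0,
    Finset.sum_image (fun a _ a' _ h => hg h)]
  refine Finset.sum_congr rfl fun a _ => ?_
  rw [prob_comp_inj' μ X hg]

lemma mi_fst_chain' {α β γ : Type*} [Fintype α] [DecidableEq α] [Fintype β] [DecidableEq β]
    [Fintype γ] [DecidableEq γ] (μ : Ω → ℝ) (X : Ω → α) (Z : Ω → γ) (A : Ω → β) :
    mi μ (fun ω => (X ω, Z ω)) A = mi μ X A + cmi μ Z A X := by
  unfold mi cmi
  have h1 : Hent μ (fun ω => (Z ω, X ω)) = Hent μ (fun ω => (X ω, Z ω)) :=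
    Hent_comp' μ (fun ω => (X ω, Z ω)) (g := Prod.swap) Prod.swap_injective
  have h2 : Hent μ (fun ω => (A ω, X ω)) = Hent μ (fun ω => (X ω, A ω)) :=
    Hent_comp' μ (fun ω => (X ω, A ω)) (g := Prod.swap) Prod.swap_injective
  have h3 : Hent μ (fun ω => (Z ω, A ω, X ω)) = Hent μ (fun ω => ((X ω, Z ω), A ω)) :=
    Hent_comp' μ (fun ω => ((X ω, Z ω), A ω)) (g := fun p => (p.1.2, p.2, p.1.1))
      (by rintro ⟨⟨x, z⟩, a⟩ ⟨⟨x', z'⟩, a'⟩ h; simp_all [Prod.ext_iff])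
  rw [h1, h2, h3]; ring

lemma mi_snd_chain' {α β γ : Type*} [Fintype α] [DecidableEq α] [Fintype β] [DecidableEq β]
    [Fintype γ] [DecidableEq γ] (μ : Ω → ℝ) (X : Ω → α) (Z : Ω → γ) (A : Ω → β) :
    mi μ (fun ω => (X ω, Z ω)) A = mi μ Z A + cmi μ X A Z := by
  unfold mi cmi
  have h1 : Hent μ (fun ω => (A ω, Z ω)) = Hent μ (fun ω => (Z ω, A ω)) :=
    Hent_comp' μ (fun ω => (Z ω, A ω)) (g := Prod.swap) Prod.swap_injective
  have h3 : Hent μ (fun ω => (X ω, A ω, Z ω)) = Hent μ (fun ω => ((X ω, Z ω), A ω)) :=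
    Hent_comp' μ (fun ω => ((X ω, Z ω), A ω)) (g := fun p => (p.1.1, p.2, p.1.2))
      (by rintro ⟨⟨x, z⟩, a⟩ ⟨⟨x', z'⟩, a'⟩ h; simp_all [Prod.ext_iff])
  rw [h1, h3]; ring

lemma prob_pair_snd' {α β : Type*} [Fintype α] [DecidableEq α] [DecidableEq β]
    (μ : Ω → ℝ) (X : Ω → α) (Y : Ω → β) (b : β) :
    prob μ Y b = ∑ a, prob μ (fun ω => (X ω, Y ω)) (a, b) := by
  unfold prob
  rw [← Finset.sum_fiberwise_of_maps_to (t := (Finset.univ : Finset α)) (g := X)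
        (s := Finset.univ.filter (fun ω => Y ω = b)) (fun ω _ => Finset.mem_univ _) μ]
  refine Finset.sum_congr rfl fun a _ => Finset.sum_congr ?_ (fun _ _ => rfl)
  rw [Finset.filter_filter]
  apply Finset.filter_congr
  intro ω _
  simp [Prod.ext_iff, and_comm]

lemma indep_marg_fst {α β γ : Type*} [Fintype β] [DecidableEq α] [DecidableEq β]
    [DecidableEq γ] {μ : Ω → ℝ} {X : Ω → α} {Y : Ω → β} {T : Ω → γ}
    (h : Indep μ (fun ω => (X ω, Y ω)) T) : Indep μ X T := by
  intro a c
  have key : prob μ (fun ω => (X ω, T ω)) (a, c)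
      = ∑ b, prob μ (fun ω => ((X ω, Y ω), T ω)) ((a, b), c) := by
    unfold prob
    rw [← Finset.sum_fiberwise_of_maps_to (t := (Finset.univ : Finset β)) (g := Y)
          (s := Finset.univ.filter (fun ω => (X ω, T ω) = (a, c)))
          (fun ω _ => Finset.mem_univ _) μ]
    refine Finset.sum_congr rfl fun b _ => Finset.sum_congr ?_ (fun _ _ => rfl)
    rw [Finset.filter_filter]
    apply Finset.filter_congr
    intro ω _
    simp only [Prod.ext_iff]
    tauto
  rw [key]
  calc ∑ b, prob μ (fun ω => ((X ω, Y ω), T ω)) ((a, b), c)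
      = ∑ b, prob μ (fun ω => (X ω, Y ω)) (a, b) * prob μ T c := by
        refine Finset.sum_congr rfl fun b _ => h (a, b) c
    _ = (∑ b, prob μ (fun ω => (X ω, Y ω)) (a, b)) * prob μ T c := by
        rw [Finset.sum_mul]
    _ = prob μ X a * prob μ T c := by rw [← prob_pair_fst']

lemma Hent_pair_of_indep' {α β : Type*} [Fintype α] [DecidableEq α] [Fintype β]
    [DecidableEq β] {μ : Ω → ℝ} (hμ : IsPMF μ) {X : Ω → α} {Y : Ω → β}
    (h : Indep μ X Y) :
    Hent μ (fun ω => (X ω, Y ω)) = Hent μ X + Hent μ Y := by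
  unfold Hent
  rw [Fintype.sum_prod_type]
  have key : ∀ (a : α) (b : β),
      prob μ (fun ω => (X ω, Y ω)) (a, b) * Real.logb 2 (prob μ (fun ω => (X ω, Y ω)) (a, b))
      = prob μ Y b * (prob μ X a * Real.logb 2 (prob μ X a))
        + prob μ X a * (prob μ Y b * Real.logb 2 (prob μ Y b)) := by
    intro a b
    rw [h a b]
    by_cases hp : prob μ X a = 0
    · simp [hp]
    by_cases hq : prob μ Y b = 0
    · simp [hq]
    rw [Real.logb, Real.logb, Real.logb, Real.log_mul hp hq]
    ring
  have hsx : ∑ a, prob μ X a = 1 := by rw [sum_prob']; exact hμ.2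
  have hsy : ∑ b, prob μ Y b = 1 := by rw [sum_prob']; exact hμ.2
  have e1 : ∑ a : α, ∑ b : β, prob μ Y b * (prob μ X a * Real.logb 2 (prob μ X a))
      = ∑ a : α, prob μ X a * Real.logb 2 (prob μ X a) := by
    refine Finset.sum_congr rfl fun a _ => ?_
    rw [← Finset.sum_mul, hsy, one_mul]
  have e2 : ∑ a : α, ∑ b : β, prob μ X a * (prob μ Y b * Real.logb 2 (prob μ Y b))
      = ∑ b : β, prob μ Y b * Real.logb 2 (prob μ Y b) := by
    simp_rw [← Finset.mul_sum]
    rw [← Finset.sum_mul, hsx, one_mul]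
  simp_rw [key, Finset.sum_add_distrib]
  rw [e1, e2]
  ring

lemma mi_eq_zero_of_indep' {α β : Type*} [Fintype α] [DecidableEq α] [Fintype β]
    [DecidableEq β] {μ : Ω → ℝ} (hμ : IsPMF μ) {X : Ω → α} {Y : Ω → β}
    (h : Indep μ X Y) : mi μ X Y = 0 := by
  unfold mi
  rw [Hent_pair_of_indep' hμ h]
  ring

lemma mi_nonneg' {α β : Type*} [Fintype α] [DecidableEq α] [Fintype β] [DecidableEq β]
    {μ : Ω → ℝ} (hμ : IsPMF μ) (X : Ω → α) (Y : Ω → β) : 0 ≤ mi μ X Y := by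
  have hlog2 : (0:ℝ) < Real.log 2 := Real.log_pos (by norm_num)
  set p : α × β → ℝ := prob μ (fun ω => (X ω, Y ω)) with hp
  set pX : α → ℝ := prob μ X with hpX
  set pY : β → ℝ := prob μ Y with hpY
  have hpnn : ∀ ab, 0 ≤ p ab := fun ab => prob_nonneg' hμ.1 _ ab
  have hXnn : ∀ a, 0 ≤ pX a := fun a => prob_nonneg' hμ.1 _ a
  have hYnn : ∀ b, 0 ≤ pY b := fun b => prob_nonneg' hμ.1 _ b
  have hmargX : ∀ a, pX a = ∑ b, p (a, b) := fun a => prob_pair_fst' μ X Y a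
  have hmargY : ∀ b, pY b = ∑ a, p (a, b) := fun b => prob_pair_snd' μ X Y b
  -- rewrite mi as a double sum
  have hmi : mi μ X Y = ∑ a, ∑ b,
      (p (a, b) * Real.logb 2 (p (a, b)) - p (a, b) * Real.logb 2 (pX a)
        - p (a, b) * Real.logb 2 (pY b)) := by
    unfold mi Hent
    rw [Fintype.sum_prod_type]
    have eX : ∑ a, pX a * Real.logb 2 (pX a)
        = ∑ a, ∑ b, p (a, b) * Real.logb 2 (pX a) := by
      refine Finset.sum_congr rfl fun a _ => ?_
      rw [hmargX a, Finset.sum_mul]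
    have eY : ∑ b, pY b * Real.logb 2 (pY b)
        = ∑ a, ∑ b, p (a, b) * Real.logb 2 (pY b) := by
      rw [Finset.sum_comm]
      refine Finset.sum_congr rfl fun b _ => ?_
      rw [hmargY b, Finset.sum_mul]
    rw [← hp, ← hpX, ← hpY, eX, eY]
    simp_rw [Finset.sum_sub_distrib]
    ring
  rw [hmi]
  have hbound : ∀ a b, (p (a, b) - pX a * pY b) / Real.log 2
      ≤ p (a, b) * Real.logb 2 (p (a, b)) - p (a, b) * Real.logb 2 (pX a)
        - p (a, b) * Real.logb 2 (pY b) := by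
    intro a b
    rcases eq_or_lt_of_le (hpnn (a, b)) with hz | hpos
    · rw [← hz]
      simp only [zero_mul, zero_sub, sub_zero, zero_div, neg_zero, sub_self]
      have : 0 ≤ pX a * pY b / Real.log 2 :=
        div_nonneg (mul_nonneg (hXnn a) (hYnn b)) hlog2.le
      rw [neg_div]
      linarith
    · have hXpos : 0 < pX a := by
        rw [hmargX a]
        calc (0:ℝ) < p (a, b) := hpos
          _ ≤ ∑ b', p (a, b') :=
            Finset.single_le_sum (fun b' _ => hpnn (a, b')) (Finset.mem_univ b)
      have hYpos : 0 < pY b := by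
        rw [hmargY b]
        calc (0:ℝ) < p (a, b) := hpos
          _ ≤ ∑ a', p (a', b) :=
            Finset.single_le_sum (fun a' _ => hpnn (a', b)) (Finset.mem_univ a)
      have hqpos : 0 < pX a * pY b := mul_pos hXpos hYpos
      have hkey : Real.log (pX a * pY b / p (a, b)) ≤ pX a * pY b / p (a, b) - 1 :=
        Real.log_le_sub_one_of_pos (div_pos hqpos hpos)
      rw [Real.log_div hqpos.ne' hpos.ne'] at hkey
      have h2 : p (a, b) * Real.log (pX a * pY b) - p (a, b) * Real.log (p (a, b))
          ≤ pX a * pY b - p (a, b) := by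
        have h := mul_le_mul_of_nonneg_left hkey hpos.le
        rw [mul_sub, mul_sub, mul_div_cancel₀ _ hpos.ne', mul_one] at h
        linarith
      rw [Real.log_mul hXpos.ne' hYpos.ne', mul_add] at h2
      have hnum : p (a, b) - pX a * pY b
          ≤ p (a, b) * Real.log (p (a, b)) - p (a, b) * Real.log (pX a)
            - p (a, b) * Real.log (pY b) := by linarith
      have goal_eq : p (a, b) * Real.logb 2 (p (a, b)) - p (a, b) * Real.logb 2 (pX a)
            - p (a, b) * Real.logb 2 (pY b)
          = (p (a, b) * Real.log (p (a, b)) - p (a, b) * Real.log (pX a)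
            - p (a, b) * Real.log (pY b)) / Real.log 2 := by
        rw [Real.logb, Real.logb, Real.logb]; ring
      rw [goal_eq]
      exact (div_le_div_iff_of_pos_right hlog2).mpr hnum
  calc (0:ℝ) = (∑ a, ∑ b, (p (a, b) - pX a * pY b)) / Real.log 2 := by
        have e1 : ∑ a, ∑ b, p (a, b) = 1 := by
          rw [← Fintype.sum_prod_type]
          rw [sum_prob']
          exact hμ.2
        have e2 : ∑ a, ∑ b, pX a * pY b = 1 := by
          simp_rw [← Finset.mul_sum]
          rw [← Finset.sum_mul]
          have : ∑ a, pX a = 1 := by rw [hpX, sum_prob']; exact hμ.2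
          have h2' : ∑ b, pY b = 1 := by rw [hpY, sum_prob']; exact hμ.2
          rw [this, h2', one_mul]
        simp_rw [Finset.sum_sub_distrib]
        rw [e1, e2]
        norm_num
    _ ≤ ∑ a, ∑ b, (p (a, b) * Real.logb 2 (p (a, b)) - p (a, b) * Real.logb 2 (pX a)
        - p (a, b) * Real.logb 2 (pY b)) := by
        rw [div_eq_mul_inv, Finset.sum_mul]
        refine Finset.sum_le_sum fun a _ => ?_
        rw [Finset.sum_mul]
        refine Finset.sum_le_sum fun b _ => ?_
        rw [← div_eq_mul_inv]
        exact hbound a b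

end MyHelpers

section Stmt10

variable {Ω σWc σW1 σS σY σX2 : Type*} [Fintype Ω]

/-- The past state sequence `S^{i-1}`. -/
def prefS {n : ℕ} (S : Fin n → Ω → σS) (i : Fin n) (ω : Ω) : Fin i.val → σS :=
  fun j => S ⟨j.val, lt_trans j.isLt i.isLt⟩ ω

/-- The future output sequence `Y^n_{i+1}`. -/
def sufY {n : ℕ} (Y : Fin n → Ω → σY) (i : Fin n) (ω : Ω) : Fin (n - (i.val + 1)) → σY :=
  fun j => Y ⟨i.val + 1 + j.val, by have := j.isLt; have := i.isLt; omega⟩ ω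

/-- The auxiliary random variable `V̄_i = (W_c, S^{i-1}, Y^n_{i+1})`. -/
def Vbar {n : ℕ} (Wc : Ω → σWc) (S : Fin n → Ω → σS) (Y : Fin n → Ω → σY) (i : Fin n)
    (ω : Ω) : σWc × (Fin i.val → σS) × (Fin (n - (i.val + 1)) → σY) :=
  (Wc ω, prefS S i ω, sufY Y i ω)

/-- The auxiliary random variable `Ū_i = (W_1, V̄_i)`. -/
def Ubar {n : ℕ} (Wc : Ω → σWc) (W1 : Ω → σW1) (S : Fin n → Ω → σS) (Y : Fin n → Ω → σY)
    (i : Fin n) (ω : Ω) :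
    σW1 × σWc × (Fin i.val → σS) × (Fin (n - (i.val + 1)) → σY) :=
  (W1 ω, Vbar Wc S Y i ω)

set_option synthInstance.maxHeartbeats 1000000 in
set_option synthInstance.maxSize 2048 in
set_option maxHeartbeats 1000000 in
/-- The implicit nonnegativity constraint in the converse proof. -/
theorem implicit_nonnegativity_constraint
    [Fintype σWc] [DecidableEq σWc] [Fintype σW1] [DecidableEq σW1]
    [Fintype σS] [DecidableEq σS] [Fintype σY] [DecidableEq σY]
    [Fintype σX2] [DecidableEq σX2]
    (μ : Ω → ℝ) (hμ : IsPMF μ) (n : ℕ)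
    (Wc : Ω → σWc) (W1 : Ω → σW1) (S : Fin n → Ω → σS) (Y : Fin n → Ω → σY)
    (X2 : Fin n → Ω → σX2)
    (hdet : ∀ i : Fin n, ∃ f : σWc × (Fin i.val → σS) → σX2,
      ∀ ω, X2 i ω = f (Wc ω, prefS S i ω))
    (hind : Indep μ (fun ω => (Wc ω, W1 ω)) (fun ω => fun i : Fin n => S i ω))
    (h1 : cmi μ W1 (fun ω => fun i : Fin n => Y i ω) Wc
            - cmi μ W1 (fun ω => fun i : Fin n => S i ω) Wc
          = ∑ i : Fin n,
              (cmi μ (Ubar Wc W1 S Y i) (Y i) (fun ω => (Vbar Wc S Y i ω, X2 i ω))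
                - cmi μ (Ubar Wc W1 S Y i) (S i) (fun ω => (Vbar Wc S Y i ω, X2 i ω))))
    (h2 : mi μ (fun ω => (Wc ω, W1 ω)) (fun ω => fun i : Fin n => Y i ω)
            - mi μ (fun ω => (Wc ω, W1 ω)) (fun ω => fun i : Fin n => S i ω)
          ≤ ∑ i : Fin n,
              (mi μ (fun ω => (Ubar Wc W1 S Y i ω, Vbar Wc S Y i ω, X2 i ω)) (Y i)
                - mi μ (fun ω => (Ubar Wc W1 S Y i ω, Vbar Wc S Y i ω, X2 i ω)) (S i))) :
    0 ≤ ∑ i : Fin n,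
          (mi μ (fun ω => (Vbar Wc S Y i ω, X2 i ω)) (Y i)
            - mi μ (fun ω => (Vbar Wc S Y i ω, X2 i ω)) (S i)) := by
  classical
  have gY := mi_fst_chain' μ Wc W1 (fun ω => fun i : Fin n => Y i ω)
  have gS := mi_fst_chain' μ Wc W1 (fun ω => fun i : Fin n => S i ω)
  have hper : ∑ i : Fin n,
      (mi μ (fun ω => (Ubar Wc W1 S Y i ω, Vbar Wc S Y i ω, X2 i ω)) (Y i)
        - mi μ (fun ω => (Ubar Wc W1 S Y i ω, Vbar Wc S Y i ω, X2 i ω)) (S i))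
      = (∑ i : Fin n,
          (mi μ (fun ω => (Vbar Wc S Y i ω, X2 i ω)) (Y i)
            - mi μ (fun ω => (Vbar Wc S Y i ω, X2 i ω)) (S i)))
        + ∑ i : Fin n,
            (cmi μ (Ubar Wc W1 S Y i) (Y i) (fun ω => (Vbar Wc S Y i ω, X2 i ω))
              - cmi μ (Ubar Wc W1 S Y i) (S i) (fun ω => (Vbar Wc S Y i ω, X2 i ω))) := by
    rw [← Finset.sum_add_distrib]
    refine Finset.sum_congr rfl fun i _ => ?_
    have eY : mi μ (fun ω => (Ubar Wc W1 S Y i ω, Vbar Wc S Y i ω, X2 i ω)) (Y i)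
        = mi μ (fun ω => (Vbar Wc S Y i ω, X2 i ω)) (Y i)
          + cmi μ (Ubar Wc W1 S Y i) (Y i) (fun ω => (Vbar Wc S Y i ω, X2 i ω)) :=
      mi_snd_chain' μ (Ubar Wc W1 S Y i) (fun ω => (Vbar Wc S Y i ω, X2 i ω)) (Y i)
    have eS : mi μ (fun ω => (Ubar Wc W1 S Y i ω, Vbar Wc S Y i ω, X2 i ω)) (S i)
        = mi μ (fun ω => (Vbar Wc S Y i ω, X2 i ω)) (S i)
          + cmi μ (Ubar Wc W1 S Y i) (S i) (fun ω => (Vbar Wc S Y i ω, X2 i ω)) :=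
      mi_snd_chain' μ (Ubar Wc W1 S Y i) (fun ω => (Vbar Wc S Y i ω, X2 i ω)) (S i)
    rw [eY, eS]
    ring
  have hindc : Indep μ Wc (fun ω => fun i : Fin n => S i ω) := indep_marg_fst hind
  have h0 : mi μ Wc (fun ω => fun i : Fin n => S i ω) = 0 := mi_eq_zero_of_indep' hμ hindc
  have hnn : 0 ≤ mi μ Wc (fun ω => fun i : Fin n => Y i ω) := mi_nonneg' hμ _ _
  rw [hper] at h2
  linarith [h1, h2, gY, gS, h0, hnn]
end Stmt10
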